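/- arXiv:2203.03104 — 3 statements merged into one kernel-verified Lean document; each statement's English description precedes it below -/
import Mathlib

section
/- Let π be a probability measure and P a Markov kernel, reversible with respect to π, with spectral gap κ ∈ (0,1), meaning ‖Pf − πf‖²_{L²(π)} ≤ (1−κ) Var_π(f) for all f ∈ L²(π). Let P̂ be a Markov kernel with ‖(P − P̂)f‖_{L²(π)} ≤ ε ‖f‖_{L²(π)} for all f ∈ L²(π). Then for every a ∈ (0,1) and every f ∈ L²(π), Var_π(P̂ f) ≤ (1 − (1−a)κ + (2 + 2/(aκ)) ε²) Var_π(f). -/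
open MeasureTheory ProbabilityTheory ENNReal Filter

private lemma iSup_min_nat (a : ℝ≥0∞) (h : a ≠ ⊤) : ⨆ n : ℕ, min a (n : ℝ≥0∞) = a := by
  apply le_antisymm (iSup_le fun n => min_le_left _ _)
  obtain ⟨n, hn⟩ := ENNReal.exists_nat_gt h
  calc a = min a n := (min_eq_left hn.le).symm
    _ ≤ _ := le_iSup (fun n : ℕ => min a (n : ℝ≥0∞)) n

private lemma kernel_memL2 {Ω : Type*} [MeasurableSpace Ω]
    (π : Measure Ω) [IsProbabilityMeasure π]
    (K : Kernel Ω Ω) [IsMarkovKernel K]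
    (f : Ω → ℝ) (hfm : StronglyMeasurable f)
    (C : ℝ)
    (hC : ∀ n : ℕ, ∫ x, (∫ y, min |f y| (n : ℝ) ∂(K x)) ^ 2 ∂π ≤ C) :
    (∀ᵐ x ∂π, Integrable f (K x)) ∧ MemLp (fun x => ∫ y, f y ∂(K x)) 2 π := by
  have hfmeas : Measurable f := hfm.measurable
  set ψ : Ω → ℝ≥0∞ := fun y => (‖f y‖₊ : ℝ≥0∞) with hψdef
  have hψm : Measurable ψ := hfmeas.enorm
  set G : ℕ → Ω → ℝ≥0∞ := fun n x => ∫⁻ y, min (ψ y) (n : ℝ≥0∞) ∂(K x) with hGdef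
  set F : Ω → ℝ≥0∞ := fun x => ∫⁻ y, ψ y ∂(K x) with hFdef
  have hGm : ∀ n, Measurable (G n) :=
    fun n => Measurable.lintegral_kernel (hψm.min measurable_const)
  have hFm : Measurable F := Measurable.lintegral_kernel hψm
  have hφm : ∀ n : ℕ, StronglyMeasurable fun y => min |f y| (n : ℝ) :=
    fun n => ((hfmeas.abs.min measurable_const).stronglyMeasurable)
  have hφnn : ∀ (n : ℕ) (y : Ω), 0 ≤ min |f y| (n : ℝ) :=
    fun n y => le_min (abs_nonneg _) (Nat.cast_nonneg n)
  have hofmono : Monotone ENNReal.ofReal := fun _ _ h => ENNReal.ofReal_le_ofReal h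
  have hmin : ∀ (n : ℕ) (y : Ω), ENNReal.ofReal (min |f y| (n : ℝ)) = min (ψ y) (n : ℝ≥0∞) := by
    intro n y
    rw [hofmono.map_min]
    congr 1
    · rw [← Real.norm_eq_abs]; exact ofReal_norm _
    · exact ENNReal.ofReal_natCast n
  have hφint : ∀ (n : ℕ) (μ : Measure Ω) [IsProbabilityMeasure μ],
      Integrable (fun y => min |f y| (n : ℝ)) μ := by
    intro n μ _
    refine Integrable.mono' (integrable_const (n : ℝ)) (hφm n).aestronglyMeasurable ?_
    filter_upwards with y
    simpa [Real.norm_eq_abs, abs_of_nonneg (hφnn n y)] using min_le_right |f y| (n : ℝ)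
  have key1 : ∀ (n : ℕ) (x : Ω), G n x = ENNReal.ofReal (∫ y, min |f y| (n : ℝ) ∂(K x)) := by
    intro n x
    rw [ofReal_integral_eq_lintegral_ofReal (hφint n (K x)) (Eventually.of_forall (hφnn n))]
    simp_rw [hmin n]
    rfl
  have hφle : ∀ (n : ℕ) (x : Ω), ∫ y, min |f y| (n : ℝ) ∂(K x) ≤ (n : ℝ) := by
    intro n x
    calc ∫ y, min |f y| (n : ℝ) ∂(K x) ≤ ∫ _, (n : ℝ) ∂(K x) :=
          integral_mono (hφint n (K x)) (integrable_const _) (fun y => min_le_right _ _)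
      _ = (n : ℝ) := by simp
  have hsm_int : ∀ (g : Ω → ℝ), StronglyMeasurable g →
      StronglyMeasurable (fun x => ∫ y, g y ∂(K x)) := by
    intro g hg
    exact StronglyMeasurable.integral_kernel_prod_right
      (f := fun _ y => g y) (hg.comp_measurable measurable_snd)
  have hGsq : ∀ n : ℕ, ∫⁻ x, (G n x) ^ 2 ∂π ≤ ENNReal.ofReal C := by
    intro n
    have hIsm : StronglyMeasurable (fun x => (∫ y, min |f y| (n : ℝ) ∂(K x)) ^ 2) :=
      (hsm_int _ (hφm n)).pow 2
    have hInn : ∀ x, 0 ≤ ∫ y, min |f y| (n : ℝ) ∂(K x) :=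
      fun x => integral_nonneg (hφnn n)
    have hIint : Integrable (fun x => (∫ y, min |f y| (n : ℝ) ∂(K x)) ^ 2) π := by
      refine Integrable.mono' (integrable_const ((n : ℝ) ^ 2)) hIsm.aestronglyMeasurable ?_
      filter_upwards with x
      rw [Real.norm_eq_abs, abs_of_nonneg (pow_nonneg (hInn x) 2)]
      exact pow_le_pow_left₀ (hInn x) (hφle n x) 2
    calc ∫⁻ x, (G n x) ^ 2 ∂π
        = ∫⁻ x, ENNReal.ofReal ((∫ y, min |f y| (n : ℝ) ∂(K x)) ^ 2) ∂π := by
          refine lintegral_congr fun x => ?_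
          rw [key1 n x, ← ENNReal.ofReal_pow (hInn x)]
      _ = ENNReal.ofReal (∫ x, (∫ y, min |f y| (n : ℝ) ∂(K x)) ^ 2 ∂π) :=
          (ofReal_integral_eq_lintegral_ofReal hIint
            (Eventually.of_forall fun x => pow_nonneg (hInn x) 2)).symm
      _ ≤ ENNReal.ofReal C := ENNReal.ofReal_le_ofReal (hC n)
  have hGmono : Monotone G := by
    intro n m h x
    exact lintegral_mono fun y => min_le_min le_rfl (by exact_mod_cast Nat.cast_le.2 h)
  have hFsup : ∀ x, F x = ⨆ n, G n x := by
    intro x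
    calc F x = ∫⁻ y, ⨆ n : ℕ, min (ψ y) (n : ℝ≥0∞) ∂(K x) := by
          refine lintegral_congr fun y => ?_
          rw [iSup_min_nat _ coe_ne_top]
      _ = ⨆ n, G n x := lintegral_iSup (fun n => hψm.min measurable_const)
          (fun n m h y => min_le_min le_rfl (by exact_mod_cast Nat.cast_le.2 h))
  have hFsq : ∀ x, (F x) ^ 2 = ⨆ n, (G n x) ^ 2 := by
    intro x
    have h1 : Tendsto (fun n => G n x) atTop (nhds (⨆ n, G n x)) :=
      tendsto_atTop_iSup (fun n m h => hGmono h x)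
    have h2 : Tendsto (fun n => (G n x) ^ 2) atTop (nhds ((⨆ n, G n x) ^ 2)) :=
      ((ENNReal.continuous_pow 2).tendsto _).comp h1
    have h3 : Tendsto (fun n => (G n x) ^ 2) atTop (nhds (⨆ n, (G n x) ^ 2)) :=
      tendsto_atTop_iSup (fun n m h => pow_le_pow_left' (hGmono h x) 2)
    rw [hFsup x]
    exact tendsto_nhds_unique h2 h3
  have hFint : ∫⁻ x, (F x) ^ 2 ∂π ≤ ENNReal.ofReal C := by
    calc ∫⁻ x, (F x) ^ 2 ∂π = ∫⁻ x, ⨆ n, (G n x) ^ 2 ∂π := lintegral_congr hFsq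
      _ = ⨆ n, ∫⁻ x, (G n x) ^ 2 ∂π := lintegral_iSup (fun n => (hGm n).pow_const 2)
          (fun n m h x => pow_le_pow_left' (hGmono h x) 2)
      _ ≤ ENNReal.ofReal C := iSup_le hGsq
  have hFae : ∀ᵐ x ∂π, F x < ⊤ := by
    have h2 := ae_lt_top (hFm.pow_const 2) (lt_of_le_of_lt hFint ofReal_lt_top).ne
    filter_upwards [h2] with x hx
    by_contra h
    rw [not_lt, top_le_iff] at h
    rw [h] at hx
    exact absurd hx (by simp)
  constructor
  · filter_upwards [hFae] with x hx
    exact ⟨hfm.aestronglyMeasurable, hx⟩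
  · rw [memLp_two_iff_integrable_sq (hsm_int f hfm).aestronglyMeasurable]
    refine ⟨((hsm_int f hfm).pow 2).aestronglyMeasurable, ?_⟩
    rw [hasFiniteIntegral_def]
    calc ∫⁻ x, (‖(∫ y, f y ∂(K x)) ^ 2‖₊ : ℝ≥0∞) ∂π
        ≤ ∫⁻ x, (F x) ^ 2 ∂π := by
          refine lintegral_mono fun x => ?_
          rw [nnnorm_pow, ENNReal.coe_pow]
          exact pow_le_pow_left' (enorm_integral_le_lintegral_enorm _) 2
      _ < ⊤ := lt_of_le_of_lt hFint ofReal_lt_top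

section helpers
variable {Ω : Type*} [MeasurableSpace Ω]

private lemma sm_int (K : Kernel Ω Ω) [IsSFiniteKernel K]
    {g : Ω → ℝ} (hg : StronglyMeasurable g) :
    StronglyMeasurable fun x => ∫ y, g y ∂(K x) :=
  StronglyMeasurable.integral_kernel_prod_right (f := fun _ y => g y)
    (hg.comp_measurable measurable_snd)

private lemma int_of_bound (μ : Measure Ω) [IsFiniteMeasure μ]
    {g : Ω → ℝ} (hg : AEStronglyMeasurable g μ) (c : ℝ) (hb : ∀ x, |g x| ≤ c) :
    Integrable g μ :=
  Integrable.mono' (integrable_const c) hg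
    (Eventually.of_forall fun x => by rw [Real.norm_eq_abs]; exact hb x)

end helpers

private lemma elem_sq {t : ℝ} (p q m : ℝ) (ht : 0 < t) :
    (q - m) ^ 2 ≤ (1 + t) * (p - m) ^ 2 + (1 + 1 / t) * (p - q) ^ 2 := by
  have ht' : t ≠ 0 := ht.ne'
  have key : t * ((1 + t) * (p - m) ^ 2 + (1 + 1 / t) * (p - q) ^ 2 - (q - m) ^ 2)
      = (t * (p - m) - (q - p)) ^ 2 := by
    field_simp; ring
  nlinarith [sq_nonneg (t * (p - m) - (q - p)), ht]

set_option maxHeartbeats 1000000 in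
/-- Spectral-gap perturbation: if `P` has spectral gap `κ` w.r.t. `π` and `P̂` is `ε`-close
to `P` in `L²(π)` operator norm, then `Var_π(P̂f) ≤ (1 − (1−a)κ + (2 + 2/(aκ))ε²) Var_π f`. -/
theorem var_perturbed_kernel_le {Ω : Type*} [MeasurableSpace Ω]
    (π : Measure Ω) [IsProbabilityMeasure π]
    (P Phat : Kernel Ω Ω) [IsMarkovKernel P] [IsMarkovKernel Phat]
    (κ ε : ℝ) (hκ : κ ∈ Set.Ioo (0 : ℝ) 1) (hε : 0 ≤ ε)
    (hgap : ∀ f : Ω → ℝ, MemLp f 2 π →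
      ∫ x, ((∫ y, f y ∂(P x)) - ∫ y, f y ∂π) ^ 2 ∂π
        ≤ (1 - κ) * ∫ x, (f x - ∫ y, f y ∂π) ^ 2 ∂π)
    (hpert : ∀ f : Ω → ℝ, MemLp f 2 π →
      ∫ x, ((∫ y, f y ∂(P x)) - ∫ y, f y ∂(Phat x)) ^ 2 ∂π ≤ ε ^ 2 * ∫ x, (f x) ^ 2 ∂π)
    (a : ℝ) (ha : a ∈ Set.Ioo (0 : ℝ) 1) (f : Ω → ℝ) (hf : MemLp f 2 π) :
    ∫ x, ((∫ y, f y ∂(Phat x)) - ∫ x', (∫ y, f y ∂(Phat x')) ∂π) ^ 2 ∂π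
      ≤ (1 - (1 - a) * κ + (2 + 2 / (a * κ)) * ε ^ 2) *
          ∫ x, (f x - ∫ y, f y ∂π) ^ 2 ∂π := by
  obtain ⟨hκ0, hκ1⟩ := hκ
  obtain ⟨ha0, ha1⟩ := ha
  -- measurable representative
  set f' : Ω → ℝ := hf.1.mk f with hf'def
  have hf'sm : StronglyMeasurable f' := hf.1.stronglyMeasurable_mk
  have hff' : f =ᵐ[π] f' := hf.1.ae_eq_mk
  have hf' : MemLp f' 2 π := hf.ae_eq hff'
  have hf'sq : Integrable (fun y => (f' y) ^ 2) π := (memLp_two_iff_integrable_sq hf'.1).mp hf'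
  have hf'int : Integrable f' π := hf'.integrable one_le_two
  have hf'abs : Integrable (fun y => |f' y|) π := hf'int.abs
  set m : ℝ := ∫ y, f' y ∂π with hm
  set V : ℝ := ∫ x, (f' x - m) ^ 2 ∂π with hV
  set S : ℝ := ∫ y, (f' y) ^ 2 ∂π with hS
  set Kc : ℝ := ∫ y, |f' y| ∂π with hKc
  have hS0 : 0 ≤ S := integral_nonneg fun y => sq_nonneg _
  have hKc0 : 0 ≤ Kc := integral_nonneg fun y => abs_nonneg _
  have hV0 : 0 ≤ V := integral_nonneg fun y => sq_nonneg _
  -- Step 0 : a null set off which f = f', not charged by a.e. kernel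
  have hne : π {x | ¬ f x = f' x} = 0 := by
    have := hff'
    rw [EventuallyEq, ae_iff] at this
    exact this
  obtain ⟨N, hNsub, hNm, hNz⟩ := exists_measurable_superset_of_null hne
  set φN : Ω → ℝ := N.indicator (fun _ => (1 : ℝ)) with hφNdef
  have hφN0 : φN =ᵐ[π] 0 := by
    have hae : ∀ᵐ x ∂π, x ∉ N := by
      rw [ae_iff]
      simpa using hNz
    filter_upwards [hae] with x hx
    simp [hφNdef, Set.indicator_of_notMem hx]
  have hφNL2 : MemLp φN 2 π := (memLp_const (0 : ℝ)).ae_eq hφN0.symm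
  have hφNπ : ∫ y, φN y ∂π = 0 := by
    rw [integral_congr_ae hφN0]
    simp
  have hφNK : ∀ μ : Measure Ω, ∫ y, φN y ∂μ = (μ N).toReal := by
    intro μ
    rw [hφNdef, integral_indicator_const _ hNm]
    simp
    rfl
  have hsq0 : ∫ x, (φN x) ^ 2 ∂π = 0 := by
    rw [integral_congr_ae (hφN0.mono fun x hx => by simp [hx] : (fun x => (φN x)^2) =ᵐ[π] 0)]
    simp
  have hPNmeas : Measurable fun x => ((P x) N).toReal := (P.measurable_coe hNm).ennreal_toReal
  have hQNmeas : Measurable fun x => ((Phat x) N).toReal :=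
    (Phat.measurable_coe hNm).ennreal_toReal
  have hPN0 : ∀ᵐ x ∂π, (P x) N = 0 := by
    have h1 := hgap φN hφNL2
    rw [hφNπ] at h1
    simp_rw [sub_zero] at h1
    rw [hsq0, mul_zero] at h1
    simp_rw [hφNK] at h1
    have hint : Integrable (fun x => (((P x) N).toReal) ^ 2) π := by
      refine int_of_bound π ((hPNmeas.pow_const 2).aestronglyMeasurable) 1 fun x => ?_
      rw [abs_of_nonneg (sq_nonneg _)]
      have h2 : ((P x) N).toReal ≤ 1 := by
        rw [← ENNReal.toReal_one]
        exact ENNReal.toReal_mono one_ne_top prob_le_one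
      nlinarith [ENNReal.toReal_nonneg (a := (P x) N)]
    have hz : ∫ x, (((P x) N).toReal) ^ 2 ∂π = 0 :=
      le_antisymm h1 (integral_nonneg fun x => sq_nonneg _)
    have := (integral_eq_zero_iff_of_nonneg_ae
      (Eventually.of_forall fun x => sq_nonneg _) hint).mp hz
    filter_upwards [this] with x hx
    have : ((P x) N).toReal = 0 := by
      have := pow_eq_zero_iff (n := 2) (by norm_num) |>.mp hx
      exact this
    rcases (ENNReal.toReal_eq_zero_iff _).mp this with h | h
    · exact h
    · exact absurd h (measure_ne_top _ _)
  have hQN0 : ∀ᵐ x ∂π, (Phat x) N = 0 := by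
    have h1 := hpert φN hφNL2
    rw [hsq0, mul_zero] at h1
    simp_rw [hφNK] at h1
    have hint : Integrable (fun x => (((P x) N).toReal - ((Phat x) N).toReal) ^ 2) π := by
      refine int_of_bound π (((hPNmeas.sub hQNmeas).pow_const 2).aestronglyMeasurable) 4
        fun x => ?_
      rw [abs_of_nonneg (sq_nonneg _)]
      have hp : ((P x) N).toReal ≤ 1 := by
        rw [← ENNReal.toReal_one]
        exact ENNReal.toReal_mono one_ne_top prob_le_one
      have hq : ((Phat x) N).toReal ≤ 1 := by
        rw [← ENNReal.toReal_one]
        exact ENNReal.toReal_mono one_ne_top prob_le_one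
      nlinarith [ENNReal.toReal_nonneg (a := (P x) N), ENNReal.toReal_nonneg (a := (Phat x) N)]
    have hz : ∫ x, (((P x) N).toReal - ((Phat x) N).toReal) ^ 2 ∂π = 0 :=
      le_antisymm h1 (integral_nonneg fun x => sq_nonneg _)
    have := (integral_eq_zero_iff_of_nonneg_ae
      (Eventually.of_forall fun x => sq_nonneg _) hint).mp hz
    filter_upwards [this, hPN0] with x hx hPx
    have h2 : ((P x) N).toReal - ((Phat x) N).toReal = 0 :=
      pow_eq_zero_iff (n := 2) (by norm_num) |>.mp hx
    rw [hPx] at h2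
    simp only [ENNReal.toReal_zero, zero_sub, neg_eq_zero] at h2
    rcases (ENNReal.toReal_eq_zero_iff _).mp h2 with h | h
    · exact h
    · exact absurd h (measure_ne_top _ _)
  -- a.e. identification of kernel integrals of f with those of f'
  have hgae : (fun x => ∫ y, f y ∂(Phat x)) =ᵐ[π] fun x => ∫ y, f' y ∂(Phat x) := by
    filter_upwards [hQN0] with x hx
    refine integral_congr_ae ?_
    rw [EventuallyEq, ae_iff]
    exact measure_mono_null hNsub hx
  have hhae : (fun x => ∫ y, f y ∂(P x)) =ᵐ[π] fun x => ∫ y, f' y ∂(P x) := by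
    filter_upwards [hPN0] with x hx
    refine integral_congr_ae ?_
    rw [EventuallyEq, ae_iff]
    exact measure_mono_null hNsub hx
  -- truncations
  have hφsm : ∀ n : ℕ, StronglyMeasurable fun y => min |f' y| (n : ℝ) :=
    fun n => (hf'sm.measurable.abs.min measurable_const).stronglyMeasurable
  have hφnn : ∀ (n : ℕ) (y : Ω), 0 ≤ min |f' y| (n : ℝ) :=
    fun n y => le_min (abs_nonneg _) (Nat.cast_nonneg n)
  have hφabs : ∀ (n : ℕ) (y : Ω), |min |f' y| (n : ℝ)| ≤ (n : ℝ) :=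
    fun n y => by rw [abs_of_nonneg (hφnn n y)]; exact min_le_right _ _
  have hφint : ∀ (n : ℕ) (μ : Measure Ω), IsProbabilityMeasure μ →
      Integrable (fun y => min |f' y| (n : ℝ)) μ :=
    fun n μ _ => int_of_bound μ (hφsm n).aestronglyMeasurable _ (hφabs n)
  have hφsqint : ∀ n : ℕ, Integrable (fun y => (min |f' y| (n : ℝ)) ^ 2) π := by
    intro n
    refine int_of_bound π ((hφsm n).pow 2).aestronglyMeasurable ((n : ℝ) ^ 2) fun y => ?_
    rw [abs_of_nonneg (sq_nonneg _)]
    exact pow_le_pow_left₀ (hφnn n y) (min_le_right _ _) 2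
  have hφL2 : ∀ n : ℕ, MemLp (fun y => min |f' y| (n : ℝ)) 2 π := by
    intro n
    rw [memLp_two_iff_integrable_sq (hφsm n).aestronglyMeasurable]
    exact hφsqint n
  have hφsq_le : ∀ n : ℕ, ∫ y, (min |f' y| (n : ℝ)) ^ 2 ∂π ≤ S := by
    intro n
    refine le_trans (integral_mono (hφsqint n) hf'sq fun y => ?_) (le_of_eq hS.symm)
    calc (min |f' y| (n : ℝ)) ^ 2 ≤ |f' y| ^ 2 :=
          pow_le_pow_left₀ (hφnn n y) (min_le_left _ _) 2
      _ = f' y ^ 2 := sq_abs _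
  have hmn_nn : ∀ n : ℕ, 0 ≤ ∫ y, min |f' y| (n : ℝ) ∂π := fun n => integral_nonneg (hφnn n)
  have hmn_le : ∀ n : ℕ, ∫ y, min |f' y| (n : ℝ) ∂π ≤ Kc := fun n =>
    le_trans (integral_mono (hφint n π inferInstance) hf'abs fun y => min_le_left _ _)
      (le_of_eq hKc.symm)
  have hvar : ∀ n : ℕ,
      ∫ y, (min |f' y| (n : ℝ) - ∫ z, min |f' z| (n : ℝ) ∂π) ^ 2 ∂π ≤ S := by
    intro n
    set mn := ∫ z, min |f' z| (n : ℝ) ∂π with hmn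
    have hexp : ∀ y, (min |f' y| (n : ℝ) - mn) ^ 2
        = ((min |f' y| (n : ℝ)) ^ 2 - (2 * mn) * min |f' y| (n : ℝ)) + mn ^ 2 := by
      intro y; ring
    rw [integral_congr_ae (Eventually.of_forall hexp)]
    have hsub : Integrable (fun y => (min |f' y| (n : ℝ)) ^ 2 - 2 * mn * min |f' y| (n : ℝ)) π :=
      (hφsqint n).sub ((hφint n π inferInstance).const_mul (2 * mn))
    have hmul : Integrable (fun y => 2 * mn * min |f' y| (n : ℝ)) π :=
      (hφint n π inferInstance).const_mul (2 * mn)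
    rw [integral_add hsub (integrable_const _),
      integral_sub (hφsqint n) hmul, integral_const_mul, integral_const]
    simp only [measure_univ, probReal_univ, ENNReal.toReal_one, one_smul, smul_eq_mul, one_mul]
    have h1 := hφsq_le n
    nlinarith [hmn_nn n, sq_nonneg mn]
  -- kernel integrals of truncations are bounded
  have hPφ_nn : ∀ (n : ℕ) (x : Ω), 0 ≤ ∫ y, min |f' y| (n : ℝ) ∂(P x) :=
    fun n x => integral_nonneg (hφnn n)
  have hPφ_le : ∀ (n : ℕ) (x : Ω), ∫ y, min |f' y| (n : ℝ) ∂(P x) ≤ (n : ℝ) := by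
    intro n x
    calc ∫ y, min |f' y| (n : ℝ) ∂(P x) ≤ ∫ _, (n : ℝ) ∂(P x) :=
          integral_mono (hφint n (P x) inferInstance) (integrable_const _)
            fun y => min_le_right _ _
      _ = (n : ℝ) := by simp
  have hQφ_nn : ∀ (n : ℕ) (x : Ω), 0 ≤ ∫ y, min |f' y| (n : ℝ) ∂(Phat x) :=
    fun n x => integral_nonneg (hφnn n)
  have hQφ_le : ∀ (n : ℕ) (x : Ω), ∫ y, min |f' y| (n : ℝ) ∂(Phat x) ≤ (n : ℝ) := by
    intro n x
    calc ∫ y, min |f' y| (n : ℝ) ∂(Phat x) ≤ ∫ _, (n : ℝ) ∂(Phat x) :=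
          integral_mono (hφint n (Phat x) inferInstance) (integrable_const _)
            fun y => min_le_right _ _
      _ = (n : ℝ) := by simp
  -- uniform L² bound for P-averages of truncations
  have hCP : ∀ n : ℕ,
      ∫ x, (∫ y, min |f' y| (n : ℝ) ∂(P x)) ^ 2 ∂π ≤ 2 * ((1 - κ) * S) + 2 * Kc ^ 2 := by
    intro n
    have hgapn := hgap _ (hφL2 n)
    set mn := ∫ y, min |f' y| (n : ℝ) ∂π with hmn
    have hPsm : StronglyMeasurable fun x => ∫ y, min |f' y| (n : ℝ) ∂(P x) := sm_int P (hφsm n)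
    have hint1 : Integrable (fun x => ((∫ y, min |f' y| (n : ℝ) ∂(P x)) - mn) ^ 2) π := by
      refine int_of_bound π ((hPsm.sub stronglyMeasurable_const).pow 2).aestronglyMeasurable
        (((n : ℝ) + Kc) ^ 2) fun x => ?_
      rw [abs_of_nonneg (sq_nonneg _)]
      have h1 : |(∫ y, min |f' y| (n : ℝ) ∂(P x)) - mn| ≤ (n : ℝ) + Kc := by
        have h2 := abs_sub (∫ y, min |f' y| (n : ℝ) ∂(P x)) mn
        have h3 : |∫ y, min |f' y| (n : ℝ) ∂(P x)| ≤ (n : ℝ) := by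
          rw [abs_of_nonneg (hPφ_nn n x)]; exact hPφ_le n x
        have h4 : |mn| ≤ Kc := by rw [abs_of_nonneg (hmn_nn n)]; exact hmn_le n
        linarith
      calc ((∫ y, min |f' y| (n : ℝ) ∂(P x)) - mn) ^ 2
          = |(∫ y, min |f' y| (n : ℝ) ∂(P x)) - mn| ^ 2 := (sq_abs _).symm
        _ ≤ ((n : ℝ) + Kc) ^ 2 := pow_le_pow_left₀ (abs_nonneg _) h1 2
    have hvarn : (1 - κ) * ∫ y, (min |f' y| (n : ℝ) - mn) ^ 2 ∂π ≤ (1 - κ) * S :=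
      mul_le_mul_of_nonneg_left (hvar n) (by linarith)
    have hkey : ∀ x, (∫ y, min |f' y| (n : ℝ) ∂(P x)) ^ 2
        ≤ 2 * ((∫ y, min |f' y| (n : ℝ) ∂(P x)) - mn) ^ 2 + 2 * Kc ^ 2 := by
      intro x
      nlinarith [sq_nonneg ((∫ y, min |f' y| (n : ℝ) ∂(P x)) - 2 * mn), hmn_nn n, hmn_le n]
    calc ∫ x, (∫ y, min |f' y| (n : ℝ) ∂(P x)) ^ 2 ∂π
        ≤ ∫ x, (2 * ((∫ y, min |f' y| (n : ℝ) ∂(P x)) - mn) ^ 2 + 2 * Kc ^ 2) ∂π :=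
          integral_mono_of_nonneg (Eventually.of_forall fun x => sq_nonneg _)
            ((hint1.const_mul 2).add (integrable_const _)) (Eventually.of_forall hkey)
      _ = 2 * ∫ x, ((∫ y, min |f' y| (n : ℝ) ∂(P x)) - mn) ^ 2 ∂π + 2 * Kc ^ 2 := by
          have hm1 : Integrable
              (fun x => 2 * ((∫ y, min |f' y| (n : ℝ) ∂(P x)) - mn) ^ 2) π :=
            hint1.const_mul 2
          rw [integral_add hm1 (integrable_const _), integral_const_mul, integral_const]
          simp
      _ ≤ 2 * ((1 - κ) * S) + 2 * Kc ^ 2 := by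
          have h5 := le_trans hgapn hvarn
          linarith
  -- uniform L² bound for Phat-averages of truncations
  have hCQ : ∀ n : ℕ,
      ∫ x, (∫ y, min |f' y| (n : ℝ) ∂(Phat x)) ^ 2 ∂π
        ≤ 2 * (ε ^ 2 * S) + 2 * (2 * ((1 - κ) * S) + 2 * Kc ^ 2) := by
    intro n
    have hpertn := hpert _ (hφL2 n)
    have hPsm : StronglyMeasurable fun x => ∫ y, min |f' y| (n : ℝ) ∂(P x) := sm_int P (hφsm n)
    have hQsm : StronglyMeasurable fun x => ∫ y, min |f' y| (n : ℝ) ∂(Phat x) :=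
      sm_int Phat (hφsm n)
    have hint1 : Integrable (fun x =>
        ((∫ y, min |f' y| (n : ℝ) ∂(P x)) - ∫ y, min |f' y| (n : ℝ) ∂(Phat x)) ^ 2) π := by
      refine int_of_bound π ((hPsm.sub hQsm).pow 2).aestronglyMeasurable
        ((2 * (n : ℝ)) ^ 2) fun x => ?_
      rw [abs_of_nonneg (sq_nonneg _)]
      have h1 : |(∫ y, min |f' y| (n : ℝ) ∂(P x)) - ∫ y, min |f' y| (n : ℝ) ∂(Phat x)|
          ≤ 2 * (n : ℝ) := by
        have h2 := abs_sub (∫ y, min |f' y| (n : ℝ) ∂(P x)) (∫ y, min |f' y| (n : ℝ) ∂(Phat x))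
        have h3 : |∫ y, min |f' y| (n : ℝ) ∂(P x)| ≤ (n : ℝ) := by
          rw [abs_of_nonneg (hPφ_nn n x)]; exact hPφ_le n x
        have h4 : |∫ y, min |f' y| (n : ℝ) ∂(Phat x)| ≤ (n : ℝ) := by
          rw [abs_of_nonneg (hQφ_nn n x)]; exact hQφ_le n x
        linarith
      calc ((∫ y, min |f' y| (n : ℝ) ∂(P x)) - ∫ y, min |f' y| (n : ℝ) ∂(Phat x)) ^ 2
          = |(∫ y, min |f' y| (n : ℝ) ∂(P x)) - ∫ y, min |f' y| (n : ℝ) ∂(Phat x)| ^ 2 :=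
            (sq_abs _).symm
        _ ≤ (2 * (n : ℝ)) ^ 2 := pow_le_pow_left₀ (abs_nonneg _) h1 2
    have hint2 : Integrable (fun x => (∫ y, min |f' y| (n : ℝ) ∂(P x)) ^ 2) π := by
      refine int_of_bound π (hPsm.pow 2).aestronglyMeasurable ((n : ℝ) ^ 2) fun x => ?_
      rw [abs_of_nonneg (sq_nonneg _)]
      exact pow_le_pow_left₀ (hPφ_nn n x) (hPφ_le n x) 2
    have hεS : ε ^ 2 * ∫ y, (min |f' y| (n : ℝ)) ^ 2 ∂π ≤ ε ^ 2 * S :=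
      mul_le_mul_of_nonneg_left (hφsq_le n) (sq_nonneg ε)
    have hkey : ∀ x, (∫ y, min |f' y| (n : ℝ) ∂(Phat x)) ^ 2
        ≤ 2 * ((∫ y, min |f' y| (n : ℝ) ∂(P x)) - ∫ y, min |f' y| (n : ℝ) ∂(Phat x)) ^ 2
          + 2 * (∫ y, min |f' y| (n : ℝ) ∂(P x)) ^ 2 := by
      intro x
      nlinarith [sq_nonneg (2 * (∫ y, min |f' y| (n : ℝ) ∂(P x))
        - ∫ y, min |f' y| (n : ℝ) ∂(Phat x))]
    calc ∫ x, (∫ y, min |f' y| (n : ℝ) ∂(Phat x)) ^ 2 ∂π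
        ≤ ∫ x, (2 * ((∫ y, min |f' y| (n : ℝ) ∂(P x))
            - ∫ y, min |f' y| (n : ℝ) ∂(Phat x)) ^ 2
            + 2 * (∫ y, min |f' y| (n : ℝ) ∂(P x)) ^ 2) ∂π :=
          integral_mono_of_nonneg (Eventually.of_forall fun x => sq_nonneg _)
            ((hint1.const_mul 2).add (hint2.const_mul 2)) (Eventually.of_forall hkey)
      _ = 2 * ∫ x, ((∫ y, min |f' y| (n : ℝ) ∂(P x))
            - ∫ y, min |f' y| (n : ℝ) ∂(Phat x)) ^ 2 ∂π
            + 2 * ∫ x, (∫ y, min |f' y| (n : ℝ) ∂(P x)) ^ 2 ∂π := by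
          have hm1 : Integrable (fun x => 2 * ((∫ y, min |f' y| (n : ℝ) ∂(P x))
              - ∫ y, min |f' y| (n : ℝ) ∂(Phat x)) ^ 2) π := hint1.const_mul 2
          have hm2 : Integrable (fun x => 2 * (∫ y, min |f' y| (n : ℝ) ∂(P x)) ^ 2) π :=
            hint2.const_mul 2
          rw [integral_add hm1 hm2, integral_const_mul, integral_const_mul]
      _ ≤ 2 * (ε ^ 2 * S) + 2 * (2 * ((1 - κ) * S) + 2 * Kc ^ 2) := by
          have h5 := le_trans hpertn hεS
          have h6 := hCP n
          linarith
  -- membership in L² of the kernel averages of f'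
  obtain ⟨hPint, hPL2⟩ := kernel_memL2 π P f' hf'sm _ hCP
  obtain ⟨hQint, hQL2⟩ := kernel_memL2 π Phat f' hf'sm _ hCQ
  -- spectral gap bound for f'
  have hA : ∫ x, ((∫ y, f' y ∂(P x)) - m) ^ 2 ∂π ≤ (1 - κ) * V := by
    have h1 := hgap f' hf'
    rw [← hm, ← hV] at h1
    exact h1
  have hPL2m : MemLp (fun x => (∫ y, f' y ∂(P x)) - m) 2 π := hPL2.sub (memLp_const m)
  have hQL2m : MemLp (fun x => (∫ y, f' y ∂(Phat x)) - m) 2 π := hQL2.sub (memLp_const m)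
  have hPQL2 : MemLp (fun x => (∫ y, f' y ∂(P x)) - ∫ y, f' y ∂(Phat x)) 2 π := hPL2.sub hQL2
  have hAint : Integrable (fun x => ((∫ y, f' y ∂(P x)) - m) ^ 2) π :=
    (memLp_two_iff_integrable_sq hPL2m.aestronglyMeasurable).mp hPL2m
  have hBint0 : Integrable
      (fun x => ((∫ y, f' y ∂(P x)) - ∫ y, f' y ∂(Phat x)) ^ 2) π :=
    (memLp_two_iff_integrable_sq hPQL2.aestronglyMeasurable).mp hPQL2
  -- perturbation bound for the centered function
  have hB : ∫ x, ((∫ y, f' y ∂(P x)) - ∫ y, f' y ∂(Phat x)) ^ 2 ∂π ≤ ε ^ 2 * V := by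
    have hsubL2 : MemLp (fun y => f' y - m) 2 π := hf'.sub (memLp_const m)
    have h1 := hpert _ hsubL2
    have heq : (fun x => ((∫ y, f' y - m ∂(P x)) - ∫ y, f' y - m ∂(Phat x)) ^ 2)
        =ᵐ[π] fun x => ((∫ y, f' y ∂(P x)) - ∫ y, f' y ∂(Phat x)) ^ 2 := by
      filter_upwards [hPint, hQint] with x h1x h2x
      rw [integral_sub h1x (integrable_const m), integral_sub h2x (integrable_const m)]
      simp only [integral_const, measure_univ, probReal_univ, ENNReal.toReal_one, one_smul]
      ring
    rw [integral_congr_ae heq] at h1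
    rw [← hV] at h1
    exact h1
  have ht : 0 < a * κ := mul_pos ha0 hκ0
  -- splitting inequality
  have hsplit : ∫ x, ((∫ y, f' y ∂(Phat x)) - m) ^ 2 ∂π
      ≤ (1 + a * κ) * ∫ x, ((∫ y, f' y ∂(P x)) - m) ^ 2 ∂π
        + (1 + 1 / (a * κ)) *
          ∫ x, ((∫ y, f' y ∂(P x)) - ∫ y, f' y ∂(Phat x)) ^ 2 ∂π := by
    have hptw : ∀ x, ((∫ y, f' y ∂(Phat x)) - m) ^ 2
        ≤ (1 + a * κ) * ((∫ y, f' y ∂(P x)) - m) ^ 2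
          + (1 + 1 / (a * κ)) * ((∫ y, f' y ∂(P x)) - ∫ y, f' y ∂(Phat x)) ^ 2 :=
      fun x => elem_sq _ _ _ ht
    calc ∫ x, ((∫ y, f' y ∂(Phat x)) - m) ^ 2 ∂π
        ≤ ∫ x, ((1 + a * κ) * ((∫ y, f' y ∂(P x)) - m) ^ 2
            + (1 + 1 / (a * κ)) * ((∫ y, f' y ∂(P x)) - ∫ y, f' y ∂(Phat x)) ^ 2) ∂π :=
          integral_mono_of_nonneg (Eventually.of_forall fun x => sq_nonneg _)
            ((hAint.const_mul _).add (hBint0.const_mul _)) (Eventually.of_forall hptw)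
      _ = _ := by
          have hg1 : Integrable
              (fun x => (1 + a * κ) * ((∫ y, f' y ∂(P x)) - m) ^ 2) π := hAint.const_mul _
          have hg2 : Integrable (fun x => (1 + 1 / (a * κ)) *
              ((∫ y, f' y ∂(P x)) - ∫ y, f' y ∂(Phat x)) ^ 2) π := hBint0.const_mul _
          rw [integral_add hg1 hg2, integral_const_mul, integral_const_mul]
  -- the variance is at most the second moment around m
  have hGint : Integrable (fun x => ∫ y, f' y ∂(Phat x)) π := hQL2.integrable one_le_two
  have hvarmin : ∫ x, ((∫ y, f' y ∂(Phat x)) - ∫ x', (∫ y, f' y ∂(Phat x')) ∂π) ^ 2 ∂π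
      ≤ ∫ x, ((∫ y, f' y ∂(Phat x)) - m) ^ 2 ∂π := by
    set c : ℝ := ∫ x', (∫ y, f' y ∂(Phat x')) ∂π with hc
    have hQL2c : MemLp (fun x => (∫ y, f' y ∂(Phat x)) - c) 2 π := hQL2.sub (memLp_const c)
    have hint1 : Integrable (fun x => ((∫ y, f' y ∂(Phat x)) - c) ^ 2) π :=
      (memLp_two_iff_integrable_sq hQL2c.aestronglyMeasurable).mp hQL2c
    have hint2 : Integrable (fun x => (∫ y, f' y ∂(Phat x)) - c) π :=
      hGint.sub (integrable_const c)
    have hzero : ∫ x, ((∫ y, f' y ∂(Phat x)) - c) ∂π = 0 := by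
      rw [integral_sub hGint (integrable_const c), integral_const, ← hc]
      simp
    have hmul : Integrable (fun x => (2 * (c - m)) * ((∫ y, f' y ∂(Phat x)) - c)) π :=
      hint2.const_mul _
    have hkey : ∫ x, ((∫ y, f' y ∂(Phat x)) - m) ^ 2 ∂π
        = ∫ x, ((∫ y, f' y ∂(Phat x)) - c) ^ 2 ∂π
          + ((2 * (c - m)) * ∫ x, ((∫ y, f' y ∂(Phat x)) - c) ∂π + (c - m) ^ 2) := by
      calc ∫ x, ((∫ y, f' y ∂(Phat x)) - m) ^ 2 ∂π
          = ∫ x, (((∫ y, f' y ∂(Phat x)) - c) ^ 2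
              + ((2 * (c - m)) * ((∫ y, f' y ∂(Phat x)) - c) + (c - m) ^ 2)) ∂π :=
            integral_congr_ae (Eventually.of_forall fun x => by ring)
        _ = _ := by
            have hadd : Integrable (fun x =>
                (2 * (c - m)) * ((∫ y, f' y ∂(Phat x)) - c) + (c - m) ^ 2) π :=
              hmul.add (integrable_const _)
            rw [integral_add hint1 hadd, integral_add hmul (integrable_const _),
              integral_const_mul, integral_const]
            simp [measure_univ]
    rw [hzero, mul_zero, zero_add] at hkey
    linarith [hkey, sq_nonneg (c - m)]
  -- rewrite the goal in terms of f'
  have hc' : ∫ x', (∫ y, f y ∂(Phat x')) ∂π = ∫ x', (∫ y, f' y ∂(Phat x')) ∂π :=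
    integral_congr_ae hgae
  have hLHS : ∫ x, ((∫ y, f y ∂(Phat x)) - ∫ x', (∫ y, f y ∂(Phat x')) ∂π) ^ 2 ∂π
      = ∫ x, ((∫ y, f' y ∂(Phat x)) - ∫ x', (∫ y, f' y ∂(Phat x')) ∂π) ^ 2 ∂π := by
    rw [hc']
    refine integral_congr_ae ?_
    filter_upwards [hgae] with x hx
    rw [hx]
  have hm' : ∫ y, f y ∂π = m := (integral_congr_ae hff').trans hm.symm
  have hV' : ∫ x, (f x - ∫ y, f y ∂π) ^ 2 ∂π = V := by
    rw [hm']
    refine Eq.trans (integral_congr_ae ?_) hV.symm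
    filter_upwards [hff'] with x hx
    rw [hx]
  rw [hLHS, hV']
  -- numeric conclusion
  have h1t : (0:ℝ) ≤ 1 + a * κ := by positivity
  have h2t : (0:ℝ) ≤ 1 + 1 / (a * κ) := by positivity
  have hA' := mul_le_mul_of_nonneg_left hA h1t
  have hB' := mul_le_mul_of_nonneg_left hB h2t
  have e1 : (1 + a * κ) * ((1 - κ) * V) ≤ (1 - (1 - a) * κ) * V := by
    nlinarith [mul_nonneg (mul_nonneg ha0.le (mul_nonneg hκ0.le hκ0.le)) hV0]
  have e2 : (1 + 1 / (a * κ)) * (ε ^ 2 * V) ≤ ((2 + 2 / (a * κ)) * ε ^ 2) * V := by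
    have hpos : 0 ≤ 1 / (a * κ) := by positivity
    have h0 : 0 ≤ ε ^ 2 * V := mul_nonneg (sq_nonneg ε) hV0
    have h1 : (1 + 1 / (a * κ)) ≤ 2 + 2 / (a * κ) := by
      have h2 : 2 / (a * κ) = 2 * (1 / (a * κ)) := by ring
      linarith
    calc (1 + 1 / (a * κ)) * (ε ^ 2 * V) ≤ (2 + 2 / (a * κ)) * (ε ^ 2 * V) :=
          mul_le_mul_of_nonneg_right h1 h0
      _ = ((2 + 2 / (a * κ)) * ε ^ 2) * V := by ring
  have hfinal : ∫ x, ((∫ y, f' y ∂(Phat x)) - ∫ x', (∫ y, f' y ∂(Phat x')) ∂π) ^ 2 ∂π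
      ≤ (1 - (1 - a) * κ) * V + ((2 + 2 / (a * κ)) * ε ^ 2) * V := by
    linarith [hvarmin, hsplit, hA', hB', e1, e2]
  calc ∫ x, ((∫ y, f' y ∂(Phat x)) - ∫ x', (∫ y, f' y ∂(Phat x')) ∂π) ^ 2 ∂π
      ≤ (1 - (1 - a) * κ) * V + ((2 + 2 / (a * κ)) * ε ^ 2) * V := hfinal
    _ = (1 - (1 - a) * κ + (2 + 2 / (a * κ)) * ε ^ 2) * V := by ring
end

section
/- Let (X_k) be a stationary Markov chain with initial distribution π̂ and kernel P̂, and let f be a measurable function with π̂ f = 0. Suppose there exist constants ρ̂ ∈ (0,1) and a nonnegative function g such that for every k ≥ 0 and every x, |E[f(X_k) | X_0 = x]| ≤ ρ̂^k g(x). Then the Monte Carlo estimator f̂_M = (1/M) ∑_{k=1}^M f(X_k) satisfies E[f̂_M²] ≤ (2 / ((1−ρ̂) M)) · E_{π̂}[|f(X_0)| g(X_0)]. -/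
open MeasureTheory ProbabilityTheory

/-- Non-asymptotic variance bound for the Monte Carlo estimator of a stationary Markov
chain: the expectation `E[f(X_j) f(X_k)]` of the stationary chain equals
`∫ f · P̂^{|k-j|} f dπ̂`, and under the geometric decay `|P̂^k f(x)| ≤ ρ̂^k g(x)` the
second moment of `f̂_M = (1/M)∑_{k=1}^M f(X_k)` is at most
`2/((1−ρ̂)M) · E_{π̂}[|f| g]`. -/
theorem mc_variance_bound {Ω : Type*} [MeasurableSpace Ω]
    (πhat : Measure Ω) [IsProbabilityMeasure πhat]
    (Phat : Kernel Ω Ω) [IsMarkovKernel Phat]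
    (hstat : ∀ s : Set Ω, MeasurableSet s → ∫⁻ x, Phat x s ∂πhat = πhat s)
    (f g : Ω → ℝ) (hf : Measurable f) (hg : ∀ x, 0 ≤ g x)
    (hint : Integrable (fun x => |f x| * g x) πhat)
    (hzero : ∫ x, f x ∂πhat = 0)
    (ρ : ℝ) (hρ : ρ ∈ Set.Ioo (0 : ℝ) 1)
    (hdecay : ∀ (k : ℕ) (x : Ω),
      |((fun (h : Ω → ℝ) (x : Ω) => ∫ y, h y ∂(Phat x))^[k] f) x| ≤ ρ ^ k * g x)
    (M : ℕ) (hM : 0 < M) :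
    (1 / (M : ℝ) ^ 2) * ∑ j ∈ Finset.Icc 1 M, ∑ k ∈ Finset.Icc 1 M,
        ∫ x, f x * ((fun (h : Ω → ℝ) (x : Ω) =>
          ∫ y, h y ∂(Phat x))^[max j k - min j k] f) x ∂πhat
      ≤ (2 / ((1 - ρ) * M)) * ∫ x, |f x| * g x ∂πhat := by
  obtain ⟨hρ0, hρ1⟩ := hρ
  have h1ρ : (0:ℝ) < 1 - ρ := by linarith
  set C := ∫ x, |f x| * g x ∂πhat with hCdef
  have hC0 : 0 ≤ C := integral_nonneg fun x => mul_nonneg (abs_nonneg _) (hg x)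
  -- geometric sum bound
  have hgeom : ∀ n : ℕ, ∑ i ∈ Finset.range n, ρ ^ i ≤ 1 / (1 - ρ) := by
    intro n
    rw [le_div_iff₀ h1ρ]
    nlinarith [geom_sum_mul ρ n, pow_nonneg (le_of_lt hρ0) n]
  -- term bound
  have hterm : ∀ d : ℕ,
      ∫ x, f x * ((fun (h : Ω → ℝ) (x : Ω) => ∫ y, h y ∂(Phat x))^[d] f) x ∂πhat
        ≤ ρ ^ d * C := by
    intro d
    calc ∫ x, f x * ((fun (h : Ω → ℝ) (x : Ω) => ∫ y, h y ∂(Phat x))^[d] f) x ∂πhat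
        ≤ |∫ x, f x * ((fun (h : Ω → ℝ) (x : Ω) => ∫ y, h y ∂(Phat x))^[d] f) x ∂πhat| :=
          le_abs_self _
      _ ≤ ∫ x, |f x| * |((fun (h : Ω → ℝ) (x : Ω) => ∫ y, h y ∂(Phat x))^[d] f) x| ∂πhat :=
          by
            simpa [Real.norm_eq_abs] using norm_integral_le_integral_norm (μ := πhat)
              fun x => f x * ((fun (h : Ω → ℝ) (x : Ω) => ∫ y, h y ∂(Phat x))^[d] f) x
      _ ≤ ∫ x, ρ ^ d * (|f x| * g x) ∂πhat := by
          apply integral_mono_of_nonneg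
          · exact Filter.Eventually.of_forall fun x =>
              mul_nonneg (abs_nonneg _) (abs_nonneg _)
          · exact hint.const_mul _
          · refine Filter.Eventually.of_forall fun x => ?_
            dsimp only
            calc |f x| * |((fun (h : Ω → ℝ) (x : Ω) => ∫ y, h y ∂(Phat x))^[d] f) x|
                ≤ |f x| * (ρ ^ d * g x) :=
                  mul_le_mul_of_nonneg_left (hdecay d x) (abs_nonneg _)
              _ = ρ ^ d * (|f x| * g x) := by ring
      _ = ρ ^ d * C := by rw [integral_const_mul]
  -- inner sum of ρ powers
  have hinner : ∀ j ∈ Finset.Icc 1 M, ∑ k ∈ Finset.Icc 1 M, ρ ^ (max j k - min j k)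
      ≤ 2 / (1 - ρ) := by
    intro j hj
    obtain ⟨hj1, hjM⟩ := Finset.mem_Icc.mp hj
    rw [show Finset.Icc 1 M = Finset.Ioc 0 M from rfl,
      ← Finset.sum_Ioc_consecutive _ (Nat.zero_le j) hjM]
    have h1 : ∑ k ∈ Finset.Ioc 0 j, ρ ^ (max j k - min j k) ≤ 1 / (1 - ρ) := by
      have e : ∑ k ∈ Finset.Ioc 0 j, ρ ^ (max j k - min j k)
          = ∑ i ∈ Finset.range j, ρ ^ i := by
        rw [show Finset.Ioc 0 j = Finset.Ico 1 (j+1) by rfl, Finset.sum_Ico_eq_sum_range]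
        simp only [Nat.add_sub_cancel]
        rw [← Finset.sum_range_reflect]
        refine Finset.sum_congr rfl fun i hi => ?_
        have hi' : i < j := Finset.mem_range.mp hi
        congr 1
        omega
      rw [e]; exact hgeom j
    have h2 : ∑ k ∈ Finset.Ioc j M, ρ ^ (max j k - min j k) ≤ 1 / (1 - ρ) := by
      have e : ∑ k ∈ Finset.Ioc j M, ρ ^ (max j k - min j k)
          = ∑ i ∈ Finset.range (M - j), ρ ^ (i + 1) := by
        rw [show Finset.Ioc j M = Finset.Ico (j+1) (M+1) by
          rw [← Finset.Icc_add_one_left_eq_Ioc, ← Finset.Ico_add_one_right_eq_Icc], Finset.sum_Ico_eq_sum_range]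
        rw [show M + 1 - (j + 1) = M - j by omega]
        refine Finset.sum_congr rfl fun i hi => ?_
        congr 1
        omega
      rw [e]
      calc ∑ i ∈ Finset.range (M - j), ρ ^ (i + 1)
          ≤ ∑ i ∈ Finset.range (M - j), ρ ^ i := by
            refine Finset.sum_le_sum fun i _ => ?_
            exact pow_le_pow_of_le_one (le_of_lt hρ0) (le_of_lt hρ1) (Nat.le_succ i)
        _ ≤ 1 / (1 - ρ) := hgeom _
    calc ∑ k ∈ Finset.Ioc 0 j, ρ ^ (max j k - min j k)
          + ∑ k ∈ Finset.Ioc j M, ρ ^ (max j k - min j k)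
        ≤ 1 / (1 - ρ) + 1 / (1 - ρ) := add_le_add h1 h2
      _ = 2 / (1 - ρ) := by ring
  -- put it together
  have hS : ∑ j ∈ Finset.Icc 1 M, ∑ k ∈ Finset.Icc 1 M,
      ∫ x, f x * ((fun (h : Ω → ℝ) (x : Ω) =>
        ∫ y, h y ∂(Phat x))^[max j k - min j k] f) x ∂πhat
      ≤ (M : ℝ) * (2 / (1 - ρ)) * C := by
    calc ∑ j ∈ Finset.Icc 1 M, ∑ k ∈ Finset.Icc 1 M,
        ∫ x, f x * ((fun (h : Ω → ℝ) (x : Ω) =>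
          ∫ y, h y ∂(Phat x))^[max j k - min j k] f) x ∂πhat
        ≤ ∑ j ∈ Finset.Icc 1 M, ∑ k ∈ Finset.Icc 1 M, ρ ^ (max j k - min j k) * C :=
          Finset.sum_le_sum fun j _ => Finset.sum_le_sum fun k _ => hterm _
      _ = ∑ j ∈ Finset.Icc 1 M, (∑ k ∈ Finset.Icc 1 M, ρ ^ (max j k - min j k)) * C := by
          simp [Finset.sum_mul]
      _ ≤ ∑ j ∈ Finset.Icc 1 M, (2 / (1 - ρ)) * C :=
          Finset.sum_le_sum fun j hj => mul_le_mul_of_nonneg_right (hinner j hj) hC0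
      _ = (M : ℝ) * (2 / (1 - ρ)) * C := by
          rw [Finset.sum_const, Nat.card_Icc]
          simp [mul_assoc]
  have hM' : (0:ℝ) < M := by exact_mod_cast hM
  calc (1 / (M : ℝ) ^ 2) * ∑ j ∈ Finset.Icc 1 M, ∑ k ∈ Finset.Icc 1 M,
        ∫ x, f x * ((fun (h : Ω → ℝ) (x : Ω) =>
          ∫ y, h y ∂(Phat x))^[max j k - min j k] f) x ∂πhat
      ≤ (1 / (M : ℝ) ^ 2) * ((M : ℝ) * (2 / (1 - ρ)) * C) :=
        mul_le_mul_of_nonneg_left hS (by positivity)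
    _ = (2 / ((1 - ρ) * M)) * C := by
        field_simp
end

section
/- Let ν be a probability measure on Ω and S : Ω → Ω a measurable involution-like map. Let Q be the Markov kernel Q(x, {S(x)}) = a(x), Q(x, {x}) = 1 − a(x) with a(x) ∈ [0,1], reversible with respect to ν, and Q̂ the kernel with acceptance function â satisfying (1 − Cε) a(x) ≤ â(x) ≤ (1 + Cε) a(x) for all x. Then for all f ∈ L²(ν), ‖(Q − Q̂)f‖_{L²(ν)} ≤ 2Cε ‖f‖_{L²(ν)}. -/
open MeasureTheory Filter

/-- Perturbation bound for swap-type Metropolis kernels: if the acceptance functions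
satisfy `(1 − Cε) a ≤ â ≤ (1 + Cε) a`, then `‖(Q − Q̂)f‖_{L²(ν)} ≤ 2Cε ‖f‖_{L²(ν)}`,
where `Qf(x) = (1 − a(x)) f(x) + a(x) f(S(x))` and similarly for `Q̂`. -/
theorem swap_kernel_perturbation {Ω : Type*} [MeasurableSpace Ω]
    (ν : Measure Ω) [IsProbabilityMeasure ν]
    (S : Ω → Ω) (hS : Measurable S)
    (a ahat : Ω → ℝ)
    (ha : ∀ x, a x ∈ Set.Icc (0 : ℝ) 1) (hahat : ∀ x, ahat x ∈ Set.Icc (0 : ℝ) 1)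
    (C ε : ℝ) (hC : 0 < C) (hε : 0 < ε) (hCε : C * ε < 1)
    (hrev : ∀ f g : Ω → ℝ, Measurable f → Measurable g →
      (∃ Cf, ∀ x, |f x| ≤ Cf) → (∃ Cg, ∀ x, |g x| ≤ Cg) →
      ∫ x, g x * ((1 - a x) * f x + a x * f (S x)) ∂ν
        = ∫ x, f x * ((1 - a x) * g x + a x * g (S x)) ∂ν)
    (hclose : ∀ x, (1 - C * ε) * a x ≤ ahat x ∧ ahat x ≤ (1 + C * ε) * a x)
    (f : Ω → ℝ) (hf : MemLp f 2 ν) :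
    eLpNorm (fun x => ((1 - a x) * f x + a x * f (S x))
        - ((1 - ahat x) * f x + ahat x * f (S x))) 2 ν
      ≤ ENNReal.ofReal (2 * C * ε) * eLpNorm f 2 ν := by
  classical
  -- Claim B: for every bounded measurable h, x ↦ a x * (h (S x) - h x) is integrable
  -- with integral zero.
  have key : ∀ h : Ω → ℝ, Measurable h → ∀ M : ℝ, (∀ x, |h x| ≤ M) →
      Integrable (fun x => a x * (h (S x) - h x)) ν ∧
      ∫ x, a x * (h (S x) - h x) ∂ν = 0 := by
    intro h hm M hM
    have hint : Integrable h ν := by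
      refine Integrable.mono' (integrable_const M) hm.aestronglyMeasurable ?_
      filter_upwards with x
      simpa [Real.norm_eq_abs] using hM x
    set X : Ω → ℝ := fun x => (1 - a x) * h x + a x * h (S x) with hXdef
    have e1 : ∫ x, X x ∂ν = ∫ x, h x ∂ν := by
      have h0 := hrev h (fun _ => 1) hm measurable_const ⟨M, hM⟩ ⟨1, fun _ => by norm_num⟩
      calc ∫ x, X x ∂ν = ∫ x, (1:ℝ) * ((1 - a x) * h x + a x * h (S x)) ∂ν :=
            integral_congr_ae (Eventually.of_forall fun x => by simp [hXdef])
        _ = ∫ x, h x * ((1 - a x) * 1 + a x * 1) ∂ν := h0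
        _ = ∫ x, h x ∂ν := integral_congr_ae (Eventually.of_forall fun x => by ring)
    have e2 : ∫ x, (X x + 1) ∂ν = ∫ x, h x ∂ν + 1 := by
      have hm1 : Measurable (fun x => h x + 1) := hm.add_const 1
      have hb1 : ∀ x, |h x + 1| ≤ M + 1 := fun x =>
        (abs_add_le _ _).trans (by have := hM x; simp only [abs_one]; linarith)
      have h0 := hrev (fun x => h x + 1) (fun _ => 1) hm1 measurable_const ⟨M + 1, hb1⟩
        ⟨1, fun _ => by norm_num⟩
      calc ∫ x, (X x + 1) ∂ν
          = ∫ x, (1:ℝ) * ((1 - a x) * (h x + 1) + a x * (h (S x) + 1)) ∂ν :=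
            integral_congr_ae (Eventually.of_forall fun x => by simp only [hXdef]; ring)
        _ = ∫ x, (h x + 1) * ((1 - a x) * 1 + a x * 1) ∂ν := h0
        _ = ∫ x, (h x + 1) ∂ν := integral_congr_ae (Eventually.of_forall fun x => by ring)
        _ = ∫ x, h x ∂ν + 1 := by
            rw [integral_add hint (integrable_const 1)]
            simp
    by_cases hX : Integrable X ν
    · have heq : (fun x => a x * (h (S x) - h x)) = fun x => X x - h x := by
        funext x; simp only [hXdef]; ring
      have hXi : Integrable (fun x => X x - h x) ν := hX.sub hint
      refine ⟨heq ▸ hXi, ?_⟩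
      rw [heq, integral_sub hX hint, e1, sub_self]
    · exfalso
      have hX1 : ¬ Integrable (fun x => X x + 1) ν := by
        intro H
        refine hX (((H.sub (integrable_const 1)).congr ?_))
        filter_upwards with x
        simp
      have z1 : ∫ x, X x ∂ν = 0 := integral_undef hX
      have z2 : ∫ x, (X x + 1) ∂ν = 0 := integral_undef hX1
      rw [z1] at e1; rw [z2] at e2
      linarith
  -- a measurable version g of f that agrees with f exactly outside a measurable null set N
  obtain ⟨g0, hg0m, hfg0⟩ : ∃ g0 : Ω → ℝ, Measurable g0 ∧ f =ᵐ[ν] g0 :=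
    ⟨hf.1.mk f, hf.1.stronglyMeasurable_mk.measurable, hf.1.ae_eq_mk⟩
  set N : Set Ω := toMeasurable ν {x | f x ≠ g0 x} with hNdef
  have hNmeas : MeasurableSet N := measurableSet_toMeasurable ν _
  have hNnull : ν N = 0 := by
    rw [hNdef, measure_toMeasurable]
    exact ae_iff.mp hfg0
  set g : Ω → ℝ := fun x => if x ∈ N then 0 else g0 x with hgdef
  have hgm : Measurable g := Measurable.ite hNmeas measurable_const hg0m
  have hfg : ∀ x, x ∉ N → f x = g x := by
    intro x hx
    have hx2 : f x = g0 x := by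
      by_contra hcon
      exact hx (subset_toMeasurable ν _ hcon)
    simp [hgdef, if_neg hx, hx2]
  have hNae : ∀ᵐ x ∂ν, x ∉ N := by
    rw [ae_iff]
    simpa using hNnull
  have hfgae : f =ᵐ[ν] g := by
    filter_upwards [hNae] with x hx using hfg x hx
  have hgL2 : MemLp g 2 ν := ⟨hgm.aestronglyMeasurable, by
    rw [← eLpNorm_congr_ae hfgae]; exact hf.2⟩
  have hg2int : Integrable (fun x => g x ^ 2) ν := hgL2.integrable_sq
  have hg2nonneg : (0:ℝ) ≤ ∫ x, g x ^ 2 ∂ν := integral_nonneg fun x => sq_nonneg _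
  -- a vanishes a.e. on S⁻¹ N
  have hind := key (fun x => if x ∈ N then (1:ℝ) else 0)
    (measurable_const.ite hNmeas measurable_const) 1
    (fun x => by by_cases hx : x ∈ N <;> simp [hx])
  have hXNzero : (fun x => a x * ((if S x ∈ N then (1:ℝ) else 0) - (if x ∈ N then (1:ℝ) else 0)))
      =ᵐ[ν] 0 := by
    refine (integral_eq_zero_iff_of_nonneg_ae ?_ hind.1).mp hind.2
    filter_upwards [hNae] with x hx
    simp only [if_neg hx, sub_zero, Pi.zero_apply]
    have := (ha x).1
    split <;> nlinarith
  have haSN : ∀ᵐ x ∂ν, S x ∈ N → a x = 0 := by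
    filter_upwards [hXNzero, hNae] with x h1 h2 hSx
    simp only [if_pos hSx, if_neg h2, sub_zero, mul_one, Pi.zero_apply] at h1
    exact h1
  -- the difference function, rewritten via g
  set D : Ω → ℝ := fun x => (a x - ahat x) * (g (S x) - g x) with hDdef
  have hae : (fun x => ((1 - a x) * f x + a x * f (S x))
      - ((1 - ahat x) * f x + ahat x * f (S x))) =ᵐ[ν] D := by
    filter_upwards [hNae, haSN] with x hx hsx
    have hfx : f x = g x := hfg x hx
    by_cases hS' : S x ∈ N
    · have ha0 : a x = 0 := hsx hS'
      have hahat0 : ahat x = 0 := by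
        have h1 := (hclose x).1; have h2 := (hclose x).2
        rw [ha0] at h1 h2
        simp only [mul_zero] at h1 h2
        linarith
      simp [hDdef, ha0, hahat0, hfx]
    · have hfsx : f (S x) = g (S x) := hfg _ hS'
      simp only [hDdef, hfx, hfsx]
      ring
  -- pointwise bound D x ^ 2 ≤ C²ε² · a x (g(Sx) − g x)²
  set V : Ω → ℝ := fun x => a x * (g (S x) - g x) ^ 2 with hVdef
  have hDV : ∀ x, D x ^ 2 ≤ C ^ 2 * ε ^ 2 * V x := by
    intro x
    have h1 := (hclose x).1; have h2 := (hclose x).2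
    have ha1 := (ha x).1; have ha2 := (ha x).2
    have habs : (a x - ahat x) ^ 2 ≤ (C * ε * a x) ^ 2 := by
      have hl : -(C * ε * a x) ≤ a x - ahat x := by nlinarith
      have hr : a x - ahat x ≤ C * ε * a x := by nlinarith
      nlinarith
    have ha2' : a x ^ 2 ≤ a x := by nlinarith
    simp only [hDdef, hVdef]
    calc ((a x - ahat x) * (g (S x) - g x)) ^ 2
        = (a x - ahat x) ^ 2 * (g (S x) - g x) ^ 2 := by ring
      _ ≤ (C * ε * a x) ^ 2 * (g (S x) - g x) ^ 2 :=
          mul_le_mul_of_nonneg_right habs (sq_nonneg _)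
      _ = C ^ 2 * ε ^ 2 * (a x ^ 2 * (g (S x) - g x) ^ 2) := by ring
      _ ≤ C ^ 2 * ε ^ 2 * (a x * (g (S x) - g x) ^ 2) := by
          refine mul_le_mul_of_nonneg_left ?_ (by positivity)
          exact mul_le_mul_of_nonneg_right ha2' (sq_nonneg _)
  -- truncations
  set t : ℕ → Ω → ℝ := fun n x => max (-(n:ℝ)) (min (n:ℝ) (g x)) with htdef
  have htm : ∀ n, Measurable (t n) := by
    intro n
    simp only [htdef]
    exact measurable_const.max (measurable_const.min hgm)
  have htb : ∀ (n : ℕ) (x : Ω), |t n x| ≤ (n:ℝ) := by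
    intro n x
    rw [abs_le]
    refine ⟨le_max_left _ _, max_le (neg_le_self (Nat.cast_nonneg n)) (min_le_left _ _)⟩
  have htg : ∀ (n : ℕ) (x : Ω), |t n x| ≤ |g x| := by
    intro n x
    rw [abs_le]
    constructor
    · refine le_trans (le_min ?_ (neg_abs_le _)) (le_max_right _ _)
      exact le_trans (neg_nonpos.mpr (abs_nonneg _)) (Nat.cast_nonneg n)
    · exact max_le (le_trans (neg_nonpos.mpr (Nat.cast_nonneg n)) (abs_nonneg _))
        (le_trans (min_le_right _ _) (le_abs_self _))
  have hteq : ∀ (n : ℕ) (x : Ω), |g x| ≤ (n:ℝ) → t n x = g x := by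
    intro n x hx
    rw [abs_le] at hx
    simp only [htdef]
    rw [min_eq_right hx.2, max_eq_right hx.1]
  -- Vₙ : truncated version of V
  set Vn : ℕ → Ω → ℝ := fun n x => a x * (t n (S x) - t n x) ^ 2 with hVndef
  have hk1 := fun n => key (t n) (htm n) n (htb n)
  have hk2 := fun n => key (fun x => t n x ^ 2) ((htm n).pow_const 2) ((n:ℝ) ^ 2)
    (fun x => by
      rw [abs_pow]
      exact pow_le_pow_left₀ (abs_nonneg _) (htb n x) 2)
  have hVn_eq : ∀ n, Vn n = fun x =>
      (a x * (t n (S x) ^ 2 - t n x ^ 2)) - 2 * (t n x * (a x * (t n (S x) - t n x))) := by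
    intro n
    funext x
    simp only [hVndef]
    ring
  have htX_int : ∀ n, Integrable (fun x => t n x * (a x * (t n (S x) - t n x))) ν := by
    intro n
    refine Integrable.bdd_mul (c := (n:ℝ)) (hk1 n).1 (htm n).aestronglyMeasurable (Eventually.of_forall ?_)
    intro x
    simpa [Real.norm_eq_abs] using htb n x
  have hVn_int : ∀ n, Integrable (Vn n) ν := by
    intro n
    rw [hVn_eq n]
    exact (hk2 n).1.sub ((htX_int n).const_mul 2)
  have hVn_nonneg : ∀ (n : ℕ) (x : Ω), 0 ≤ Vn n x := fun n x =>
    mul_nonneg (ha x).1 (sq_nonneg _)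
  have ht2_int : ∀ n, Integrable (fun x => t n x ^ 2) ν := by
    intro n
    refine Integrable.mono' (integrable_const ((n:ℝ) ^ 2)) ((htm n).pow_const 2).aestronglyMeasurable ?_
    filter_upwards with x
    rw [Real.norm_eq_abs, abs_pow]
    exact pow_le_pow_left₀ (abs_nonneg _) (htb n x) 2
  -- the integral bound ∫ Vₙ ≤ 4 ∫ g²
  have hIV : ∀ n, ∫ x, Vn n x ∂ν ≤ 4 * ∫ x, g x ^ 2 ∂ν := by
    intro n
    have habs : ∀ x, |t n x * (a x * (t n (S x) - t n x))| ≤ t n x ^ 2 + Vn n x / 4 := by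
      intro x
      have ha1 := (ha x).1; have ha2 := (ha x).2
      have h1 : |t n x| * |t n (S x) - t n x| ≤ t n x ^ 2 + (t n (S x) - t n x) ^ 2 / 4 := by
        nlinarith [sq_nonneg (|t n x| - |t n (S x) - t n x| / 2), sq_abs (t n x),
          sq_abs (t n (S x) - t n x)]
      have h2 : |t n x * (a x * (t n (S x) - t n x))|
          = a x * (|t n x| * |t n (S x) - t n x|) := by
        rw [abs_mul, abs_mul, abs_of_nonneg ha1]
        ring
      rw [h2]
      simp only [hVndef]
      nlinarith [abs_nonneg (t n x), abs_nonneg (t n (S x) - t n x), sq_abs (t n x),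
        sq_abs (t n (S x) - t n x), sq_nonneg (t n (S x) - t n x)]
    have hint_abs : Integrable (fun x => |t n x * (a x * (t n (S x) - t n x))|) ν :=
      (htX_int n).abs
    have h3 : ∫ x, |t n x * (a x * (t n (S x) - t n x))| ∂ν
        ≤ ∫ x, (t n x ^ 2 + Vn n x / 4) ∂ν := by
      refine integral_mono hint_abs ((ht2_int n).add ((hVn_int n).div_const 4)) ?_
      intro x
      exact habs x
    have h5 : ∫ x, (t n x ^ 2 + Vn n x / 4) ∂ν
        = (∫ x, t n x ^ 2 ∂ν) + (∫ x, Vn n x ∂ν) / 4 := by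
      rw [integral_add (ht2_int n) ((hVn_int n).div_const 4), integral_div]
    have h6 : ∫ x, t n x ^ 2 ∂ν ≤ ∫ x, g x ^ 2 ∂ν := by
      refine integral_mono (ht2_int n) hg2int ?_
      intro x
      calc t n x ^ 2 = |t n x| ^ 2 := (sq_abs _).symm
        _ ≤ |g x| ^ 2 := pow_le_pow_left₀ (abs_nonneg _) (htg n x) 2
        _ = g x ^ 2 := sq_abs _
    have h4 : |∫ x, t n x * (a x * (t n (S x) - t n x)) ∂ν|
        ≤ ∫ x, |t n x * (a x * (t n (S x) - t n x))| ∂ν := by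
      simpa only [Real.norm_eq_abs] using
        norm_integral_le_integral_norm (μ := ν) (fun x => t n x * (a x * (t n (S x) - t n x)))
    have h7 : ∫ x, Vn n x ∂ν
        = -2 * ∫ x, t n x * (a x * (t n (S x) - t n x)) ∂ν := by
      have := hVn_eq n
      calc ∫ x, Vn n x ∂ν
          = ∫ x, ((a x * (t n (S x) ^ 2 - t n x ^ 2))
              - 2 * (t n x * (a x * (t n (S x) - t n x)))) ∂ν := by rw [← this]
        _ = (∫ x, a x * (t n (S x) ^ 2 - t n x ^ 2) ∂ν)
              - ∫ x, 2 * (t n x * (a x * (t n (S x) - t n x))) ∂ν :=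
            integral_sub (hk2 n).1 ((htX_int n).const_mul 2)
        _ = -2 * ∫ x, t n x * (a x * (t n (S x) - t n x)) ∂ν := by
            rw [(hk2 n).2, integral_const_mul]
            ring
    have habsI : |∫ x, t n x * (a x * (t n (S x) - t n x)) ∂ν|
        ≤ (∫ x, g x ^ 2 ∂ν) + (∫ x, Vn n x ∂ν) / 4 := by
      calc |∫ x, t n x * (a x * (t n (S x) - t n x)) ∂ν|
          ≤ ∫ x, |t n x * (a x * (t n (S x) - t n x))| ∂ν := h4
        _ ≤ ∫ x, (t n x ^ 2 + Vn n x / 4) ∂ν := h3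
        _ = (∫ x, t n x ^ 2 ∂ν) + (∫ x, Vn n x ∂ν) / 4 := h5
        _ ≤ (∫ x, g x ^ 2 ∂ν) + (∫ x, Vn n x ∂ν) / 4 := by linarith
    have := abs_le.mp habsI
    rw [h7]
    nlinarith [this.1, this.2]
  -- Fatou's lemma
  set c : ℝ := C ^ 2 * ε ^ 2 with hcdef
  have hcnn : 0 ≤ c := by positivity
  set F : ℕ → Ω → ENNReal := fun n x => ENNReal.ofReal (c * Vn n x) with hFdef
  have hFmeas : ∀ n, AEMeasurable (F n) ν := fun n =>
    ENNReal.measurable_ofReal.comp_aemeasurable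
      (((hVn_int n).aestronglyMeasurable.aemeasurable).const_mul c)
  have htendF : ∀ x, Tendsto (fun n => F n x) atTop (nhds (ENNReal.ofReal (c * V x))) := by
    intro x
    have hev : (fun n => F n x) =ᶠ[atTop] (fun _ => ENNReal.ofReal (c * V x)) := by
      filter_upwards [eventually_ge_atTop (⌈max |g x| |g (S x)|⌉₊)] with n hn
      have hcast : (max |g x| |g (S x)| : ℝ) ≤ (n : ℝ) :=
        le_trans (Nat.le_ceil _) (Nat.cast_le.mpr hn)
      have h1 : |g x| ≤ (n:ℝ) := le_trans (le_max_left _ _) hcast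
      have h2 : |g (S x)| ≤ (n:ℝ) := le_trans (le_max_right _ _) hcast
      simp only [hFdef, hVndef, hVdef, hteq n x h1, hteq n (S x) h2]
    exact Tendsto.congr' hev.symm tendsto_const_nhds
  have hFbound : ∀ n, ∫⁻ x, F n x ∂ν ≤ ENNReal.ofReal (c * (4 * ∫ x, g x ^ 2 ∂ν)) := by
    intro n
    have hi : Integrable (fun x => c * Vn n x) ν := (hVn_int n).const_mul c
    have hnn : 0 ≤ᵐ[ν] fun x => c * Vn n x :=
      Eventually.of_forall fun x => mul_nonneg hcnn (hVn_nonneg n x)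
    rw [hFdef, ← ofReal_integral_eq_lintegral_ofReal hi hnn]
    apply ENNReal.ofReal_le_ofReal
    rw [integral_const_mul]
    exact mul_le_mul_of_nonneg_left (hIV n) hcnn
  have hVlint : ∫⁻ x, ENNReal.ofReal (c * V x) ∂ν
      ≤ ENNReal.ofReal (c * (4 * ∫ x, g x ^ 2 ∂ν)) := by
    calc ∫⁻ x, ENNReal.ofReal (c * V x) ∂ν
        = ∫⁻ x, liminf (fun n => F n x) atTop ∂ν :=
          lintegral_congr fun x => ((htendF x).liminf_eq).symm
      _ ≤ liminf (fun n => ∫⁻ x, F n x ∂ν) atTop := lintegral_liminf_le' hFmeas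
      _ ≤ liminf (fun _ : ℕ => ENNReal.ofReal (c * (4 * ∫ x, g x ^ 2 ∂ν))) atTop :=
          liminf_le_liminf (Eventually.of_forall hFbound)
      _ = ENNReal.ofReal (c * (4 * ∫ x, g x ^ 2 ∂ν)) := liminf_const _
  -- helper : enorm squared
  have hpow : ∀ r : ℝ, ((‖r‖₊ : ENNReal)) ^ (2:ℝ) = ENNReal.ofReal (r ^ 2) := by
    intro r
    rw [← enorm_eq_nnnorm, Real.enorm_eq_ofReal_abs, ENNReal.ofReal_rpow_of_nonneg (abs_nonneg r) (by norm_num)]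
    congr 1
    rw [show ((2:ℝ)) = ((2:ℕ):ℝ) by norm_num, Real.rpow_natCast, sq_abs]
  have hDlint : ∫⁻ x, ((‖D x‖₊ : ENNReal)) ^ (2:ℝ) ∂ν
      ≤ ENNReal.ofReal (c * (4 * ∫ x, g x ^ 2 ∂ν)) := by
    refine le_trans (lintegral_mono fun x => ?_) hVlint
    rw [hpow (D x)]
    refine ENNReal.ofReal_le_ofReal ?_
    calc D x ^ 2 ≤ C ^ 2 * ε ^ 2 * V x := hDV x
      _ = c * V x := by rw [hcdef]
  have hglint : ∫⁻ x, ((‖g x‖₊ : ENNReal)) ^ (2:ℝ) ∂ν = ENNReal.ofReal (∫ x, g x ^ 2 ∂ν) := by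
    rw [ofReal_integral_eq_lintegral_ofReal hg2int
      (Eventually.of_forall fun x => sq_nonneg _)]
    exact lintegral_congr fun x => hpow (g x)
  -- put everything together
  rw [eLpNorm_congr_ae hae, eLpNorm_congr_ae hfgae,
    eLpNorm_eq_lintegral_rpow_enorm_toReal (by norm_num) (by norm_num),
    eLpNorm_eq_lintegral_rpow_enorm_toReal (by norm_num) (by norm_num)]
  have h2t : ((2:ENNReal)).toReal = (2:ℝ) := by norm_num
  rw [h2t]
  calc (∫⁻ x, ((‖D x‖₊ : ENNReal)) ^ (2:ℝ) ∂ν) ^ (1 / (2:ℝ))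
      ≤ (ENNReal.ofReal (c * (4 * ∫ x, g x ^ 2 ∂ν))) ^ (1 / (2:ℝ)) :=
        ENNReal.rpow_le_rpow hDlint (by norm_num)
    _ = ENNReal.ofReal ((c * (4 * ∫ x, g x ^ 2 ∂ν)) ^ (1 / (2:ℝ))) :=
        ENNReal.ofReal_rpow_of_nonneg (by positivity) (by norm_num)
    _ = ENNReal.ofReal (2 * C * ε * (∫ x, g x ^ 2 ∂ν) ^ (1 / (2:ℝ))) := by
        congr 1
        rw [show c * (4 * ∫ x, g x ^ 2 ∂ν) = (2 * C * ε) ^ (2:ℕ) * ∫ x, g x ^ 2 ∂ν by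
          rw [hcdef]; ring]
        rw [Real.mul_rpow (by positivity) hg2nonneg, ← Real.rpow_natCast (2 * C * ε) 2,
          ← Real.rpow_mul (by positivity)]
        norm_num
    _ = ENNReal.ofReal (2 * C * ε) * ENNReal.ofReal ((∫ x, g x ^ 2 ∂ν) ^ (1 / (2:ℝ))) :=
        ENNReal.ofReal_mul (by positivity)
    _ = ENNReal.ofReal (2 * C * ε) * (∫⁻ x, ((‖g x‖₊ : ENNReal)) ^ (2:ℝ) ∂ν) ^ (1 / (2:ℝ)) := by
        rw [hglint, ENNReal.ofReal_rpow_of_nonneg hg2nonneg (by norm_num)]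
end
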